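/- Let P be a field and let X be a class of commutative P-algebras given as a family A : κ → Type. For every n : ℕ, the intersection of an arbitrary family of X-closed ideals of MvPolynomial (Fin n) P is again an X-closed ideal. -/

import Mathlib

open MvPolynomial

universe u v w x

/-- An ideal `I` of the free commutative `P`-algebra of rank `n` is `X`-closed
(for the class `X` given by the family `A`) if the quotient algebra embeds into
a product of members of the family. -/
def IsXClosed (P : Type u) [Field P] {κ : Type v} (A : κ → Type w)
    [∀ k, CommRing (A k)] [∀ k, Algebra P (A k)]
    {n : ℕ} (I : Ideal (MvPolynomial (Fin n) P)) : Prop :=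
  ∃ (J : Type (max u v w)) (k : J → κ)
    (g : (MvPolynomial (Fin n) P ⧸ I) →ₐ[P] ((j : J) → A (k j))),
    Function.Injective g

/-- the intersection of an arbitrary family of `X`-closed ideals of
`MvPolynomial (Fin n) P` is again an `X`-closed ideal. -/
theorem iInf_isXClosed (P : Type u) [Field P] {κ : Type v} (A : κ → Type w)
    [∀ k, CommRing (A k)] [∀ k, Algebra P (A k)] (n : ℕ)
    {ι : Type x} (I : ι → Ideal (MvPolynomial (Fin n) P))
    (hI : ∀ i, IsXClosed P A (I i)) :
    IsXClosed P A (⨅ i, I i) := by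
  classical
  set R := MvPolynomial (Fin n) P with hR
  set S : Set (Ideal R) := Set.range I with hS
  have hs : ∀ s : S, IsXClosed P A s.1 := fun s => by
    obtain ⟨i, hi⟩ := s.2
    exact hi ▸ hI i
  choose J k g hg using hs
  have hle : ∀ s : S, (⨅ i, I i) ≤ s.1 := fun s => by
    obtain ⟨i, hi⟩ := s.2
    exact hi ▸ iInf_le I i
  let q : ∀ s : S, (R ⧸ ⨅ i, I i) →ₐ[P] R ⧸ s.1 := fun s =>
    Ideal.Quotient.liftₐ _ (Ideal.Quotient.mkₐ P s.1)
      (fun a ha => by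
        rw [Ideal.Quotient.mkₐ_eq_mk, Ideal.Quotient.eq_zero_iff_mem]
        exact hle s ha)
  refine ⟨Σ s : S, J s, fun p => k p.1 p.2,
    Pi.algHom P _ (fun p => (Pi.evalAlgHom P _ p.2).comp ((g p.1).comp (q p.1))), ?_⟩
  rw [injective_iff_map_eq_zero]
  intro x hx
  obtain ⟨r, rfl⟩ := Ideal.Quotient.mkₐ_surjective P _ x
  rw [Ideal.Quotient.mkₐ_eq_mk, Ideal.Quotient.eq_zero_iff_mem, Ideal.mem_iInf]
  intro i
  set s : S := ⟨I i, ⟨i, rfl⟩⟩ with hs'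
  have h1 : g s (q s (Ideal.Quotient.mk (⨅ i, I i) r)) = 0 := by
    funext j
    have := congrFun hx ⟨s, j⟩
    simpa using this
  have h2 : q s (Ideal.Quotient.mk (⨅ i, I i) r) = 0 := by
    apply hg s
    rw [h1, map_zero]
  have h3 : Ideal.Quotient.mk (s.1) r = 0 := by
    rw [show q s = Ideal.Quotient.liftₐ _ (Ideal.Quotient.mkₐ P s.1) _ from rfl,
      Ideal.Quotient.liftₐ_apply] at h2
    exact h2
  rw [Ideal.Quotient.eq_zero_iff_mem] at h3
  exact h3
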